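/- Let k ≥ 1 be an integer and x ≥ k+1 an integer. For each n with k < n ≤ x, let N^{(0)}_{k,n} be the maximum of x_1·x_2·…·x_n over all n-tuples (x_1,…,x_n) of positive integers with x_1 ≤ … ≤ x_n and σ_k(x_1,…,x_n) = σ_n(x_1,…,x_n). Then Σ_{k<n≤x} f_k(n) ≤ Σ_{l ≤ max_{k<n≤x} N^{(0)}_{k,n}} f(l), where f(l) denotes the number of factorizations of l into integer factors larger than 1 with the order of factors not counting (and f(1)=1). -/

import Mathlib

/-- The `k`-th elementary symmetric polynomial of `x 0, …, x (n-1)`. -/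
def esymm (n k : ℕ) (x : Fin n → ℕ) : ℕ :=
  ∑ s ∈ Finset.univ.powersetCard k, ∏ i ∈ s, x i

/-- The set of nondecreasing `n`-tuples of positive integers with
`σ_k(x_1,…,x_n) = σ_n(x_1,…,x_n)`. -/
def sols (n k : ℕ) : Set (Fin n → ℕ) :=
  {x | (∀ i, 0 < x i) ∧ Monotone x ∧ esymm n k x = esymm n n x}

/-- The number of factorizations of `l` into factors larger than `1`, where
the order of the factors does not count (so `f 1 = 1`, via the empty factorization). -/
noncomputable def numFactorizations (l : ℕ) : ℕ :=
  Set.ncard {m : Multiset ℕ | (∀ a ∈ m, 1 < a) ∧ m.prod = l}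

/-! ### Auxiliary lemmas about `Multiset.esymm` over `ℕ` -/

lemma aux_esymm_pos (s : Multiset ℕ) (hs : ∀ a ∈ s, 0 < a) (i : ℕ)
    (hi : i ≤ Multiset.card s) : 0 < s.esymm i := by
  have hne : s.powersetCard i ≠ 0 := by
    intro h
    have h2 := Multiset.card_powersetCard i s
    rw [h] at h2
    simp only [Multiset.card_zero] at h2
    have := Nat.choose_pos hi
    omega
  obtain ⟨t, ht⟩ := Multiset.exists_mem_of_ne_zero hne
  have hts : t ≤ s := (Multiset.mem_powersetCard.mp ht).1
  have htp : (1:ℕ) ≤ t.prod := by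
    have : (1:ℕ) ^ Multiset.card t ≤ t.prod :=
      Multiset.pow_card_le_prod fun a ha => hs a (Multiset.mem_of_le hts ha)
    simpa using this
  have : t.prod ≤ s.esymm i :=
    Multiset.single_le_sum (fun y _ => Nat.zero_le y) _ (Multiset.mem_map_of_mem _ ht)
  omega

lemma aux_esymm_cons_one (s : Multiset ℕ) (j : ℕ) :
    (1 ::ₘ s).esymm (j+1) = s.esymm (j+1) + s.esymm j := by
  simp [Multiset.esymm, Multiset.powersetCard_cons, Multiset.map_map, Function.comp]

lemma aux_esymm_self (s : Multiset ℕ) : s.esymm (Multiset.card s) = s.prod := by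
  have h1 : ({s} : Multiset (Multiset ℕ)) ≤ s.powersetCard (Multiset.card s) := by
    rw [Multiset.singleton_le, Multiset.mem_powersetCard]
    exact ⟨le_refl s, rfl⟩
  have h2 : Multiset.card (s.powersetCard (Multiset.card s)) ≤
      Multiset.card ({s} : Multiset (Multiset ℕ)) := by simp
  have := Multiset.eq_of_le_of_card_le h1 h2
  simp [Multiset.esymm, ← this]

lemma aux_mono_inj (n : ℕ) (f g : Fin n → ℕ) (hf : Monotone f) (hg : Monotone g)
    (h : Multiset.map f Finset.univ.val = Multiset.map g Finset.univ.val) : f = g := by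
  rw [Fin.univ_val_map, Fin.univ_val_map] at h
  have hp : (List.ofFn f).Perm (List.ofFn g) := Quotient.exact h
  have := hp.eq_of_sortedLE hf.sortedLE_ofFn hg.sortedLE_ofFn
  exact List.ofFn_injective this

lemma aux_repl_succ (m : Multiset ℕ) (j : ℕ) :
    Multiset.replicate (j+1) 1 + m = 1 ::ₘ (Multiset.replicate j 1 + m) := by
  rw [Multiset.replicate_succ, Multiset.cons_add]

lemma aux_decomp (s : Multiset ℕ) (hs : ∀ a ∈ s, 0 < a) :
    s = Multiset.replicate (Multiset.count 1 s) 1 + s.filter (1 < ·) := by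
  have h1 : s.filter (fun a => ¬ 1 < a) = s.filter (· = 1) := by
    apply Multiset.filter_congr
    intro a ha
    have := hs a ha
    constructor <;> intro h <;> omega
  have h2 := Multiset.filter_add_not (fun a => 1 < a) s
  rw [add_comm] at h2
  rw [h1, Multiset.filter_eq'] at h2
  exact h2.symm

/-- The key injectivity result: among nondecreasing solutions of `σ_{K+1} = prod`
with more than `K+1` entries, the multiset is determined by its entries `> 1`. -/
lemma aux_key (K : ℕ) (s t : Multiset ℕ) (hs1 : ∀ a ∈ s, 0 < a) (ht1 : ∀ a ∈ t, 0 < a)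
    (hsc : K + 1 < Multiset.card s) (htc : K + 1 < Multiset.card t)
    (hse : s.esymm (K+1) = s.prod) (hte : t.esymm (K+1) = t.prod)
    (hft : s.filter (1 < ·) = t.filter (1 < ·)) : s = t := by
  set m := s.filter (1 < ·) with hm
  have hds := aux_decomp s hs1
  have hdt := aux_decomp t ht1
  rw [← hft] at hdt
  set js := Multiset.count 1 s
  set jt := Multiset.count 1 t
  have hprod : ∀ j : ℕ, (Multiset.replicate j 1 + m).prod = m.prod := by
    intro j; simp
  have gstrict : ∀ j : ℕ, K ≤ j + Multiset.card m →
      (Multiset.replicate j 1 + m).esymm (K+1) <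
        (Multiset.replicate (j+1) 1 + m).esymm (K+1) := by
    intro j hj
    rw [aux_repl_succ, aux_esymm_cons_one]
    have hpos : 0 < (Multiset.replicate j 1 + m).esymm K := by
      apply aux_esymm_pos
      · intro a ha
        rcases Multiset.mem_add.mp ha with h | h
        · rw [Multiset.eq_of_mem_replicate h]; norm_num
        · have : 1 < a := Multiset.of_mem_filter h
          omega
      · simpa using hj
    omega
  have gmono : ∀ j : ℕ, (Multiset.replicate j 1 + m).esymm (K+1) ≤
      (Multiset.replicate (j+1) 1 + m).esymm (K+1) := by
    intro j
    rw [aux_repl_succ, aux_esymm_cons_one]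
    omega
  have gchain : ∀ d j : ℕ, K ≤ j + Multiset.card m →
      (Multiset.replicate j 1 + m).esymm (K+1) <
        (Multiset.replicate (j+d+1) 1 + m).esymm (K+1) := by
    intro d
    induction d with
    | zero => intro j hj; exact gstrict j hj
    | succ d ih =>
        intro j hj
        have h2 := gmono (j+d+1)
        have h3 : j + (d+1) + 1 = (j+d+1)+1 := by omega
        rw [h3]
        exact lt_of_lt_of_le (ih j hj) h2
  have hcs : Multiset.card s = js + Multiset.card m := by rw [hds]; simp [hm]
  have hct : Multiset.card t = jt + Multiset.card m := by rw [hdt]; simp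
  have hgs : (Multiset.replicate js 1 + m).esymm (K+1) = m.prod := by
    rw [← hds, hse]
    conv_lhs => rw [hds]
    exact hprod js
  have hgt : (Multiset.replicate jt 1 + m).esymm (K+1) = m.prod := by
    rw [← hdt, hte]
    conv_lhs => rw [hdt]
    exact hprod jt
  have hjj : js = jt := by
    rcases lt_trichotomy js jt with h | h | h
    · exfalso
      obtain ⟨d, hd⟩ : ∃ d, jt = js + d + 1 := ⟨jt - js - 1, by omega⟩
      have := gchain d js (by omega)
      rw [← hd, hgs, hgt] at this
      omega
    · exact h
    · exfalso
      obtain ⟨d, hd⟩ : ∃ d, js = jt + d + 1 := ⟨js - jt - 1, by omega⟩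
      have := gchain d jt (by omega)
      rw [← hd, hgs, hgt] at this
      omega
  rw [hds, hdt, hjj]

/-! ### Counting helpers -/

lemma aux_ncard_biUnion_le {ι α : Type*} (I : Finset ι) (A : ι → Set α) :
    (⋃ i ∈ I, A i).ncard ≤ ∑ i ∈ I, (A i).ncard := by
  classical
  induction I using Finset.induction_on with
  | empty => simp
  | insert _ _ hni ih =>
      rename_i a I'
      rw [Finset.set_biUnion_insert, Finset.sum_insert hni]
      exact le_trans (Set.ncard_union_le _ _) (by omega)

lemma aux_ncard_biUnion_eq {ι α : Type*} (I : Finset ι) (A : ι → Set α)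
    (hfin : ∀ i ∈ I, (A i).Finite)
    (hdisj : ∀ i ∈ I, ∀ j ∈ I, i ≠ j → Disjoint (A i) (A j)) :
    (⋃ i ∈ I, A i).ncard = ∑ i ∈ I, (A i).ncard := by
  classical
  induction I using Finset.induction_on with
  | empty => simp
  | insert _ _ hni ih =>
      rename_i a I'
      rw [Finset.set_biUnion_insert, Finset.sum_insert hni]
      rw [Set.ncard_union_eq ?hd ?h1 ?h2]
      · rw [ih (fun i hi => hfin i (Finset.mem_insert_of_mem hi))
          (fun i hi j hj hij => hdisj i (Finset.mem_insert_of_mem hi) j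
            (Finset.mem_insert_of_mem hj) hij)]
      case hd =>
        rw [Set.disjoint_iUnion₂_right]
        intro i hi
        exact hdisj a (Finset.mem_insert_self a I') i (Finset.mem_insert_of_mem hi)
          (fun h => hni (h ▸ hi))
      case h1 => exact hfin a (Finset.mem_insert_self a I')
      case h2 =>
        exact Set.Finite.biUnion (I'.finite_toSet)
          (fun i hi => hfin i (Finset.mem_insert_of_mem hi))

lemma aux_T_finite (l : ℕ) : {m : Multiset ℕ | (∀ a ∈ m, 1 < a) ∧ m.prod = l}.Finite := by
  classical
  apply Set.Finite.subset (Multiset.finite_toSet ((l • (Finset.Ioc 1 l).val).powerset))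
  rintro m ⟨h1, h2⟩
  simp only [Set.mem_setOf_eq, Multiset.mem_powerset]
  have hcard : Multiset.card m ≤ l := by
    have hp : (2:ℕ) ^ Multiset.card m ≤ m.prod :=
      Multiset.pow_card_le_prod fun a ha => h1 a ha
    have h2p : Multiset.card m < 2 ^ Multiset.card m := Nat.lt_two_pow_self
    omega
  rw [Multiset.le_iff_count]
  intro a
  by_cases ha : a ∈ m
  · have haIoc : a ∈ Finset.Ioc 1 l := by
      rw [Finset.mem_Ioc]
      refine ⟨h1 a ha, ?_⟩
      have := Multiset.single_le_prod (fun y hy => le_of_lt (h1 y hy)) a ha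
      omega
    rw [Multiset.count_nsmul, Multiset.count_eq_one_of_mem (Finset.Ioc 1 l).nodup haIoc]
    have := Multiset.count_le_card a m
    omega
  · simp [Multiset.count_eq_zero.mpr ha]

/-- If for each `k < n ≤ x`, `N n` is the maximal product `x_1 ⋯ x_n` over all
solutions of `σ_k = σ_n`, then `Σ_{k<n≤x} f_k(n) ≤ Σ_{l ≤ max_{k<n≤x} N n} f(l)`. -/
theorem stmt2 (k x : ℕ) (hk : 1 ≤ k) (hx : k + 1 ≤ x) (N : ℕ → ℕ)
    (hN : ∀ n, k < n → n ≤ x →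
      IsGreatest {p | ∃ xs ∈ sols n k, p = ∏ i, xs i} (N n)) :
    ∑ n ∈ Finset.Ioc k x, (sols n k).ncard ≤
      ∑ l ∈ Finset.Icc 1 ((Finset.Ioc k x).sup N), numFactorizations l := by
  classical
  set L := (Finset.Ioc k x).sup N with hL
  set T : ℕ → Set (Multiset ℕ) :=
    fun l => {m : Multiset ℕ | (∀ a ∈ m, 1 < a) ∧ m.prod = l} with hT
  set A : ℕ → Set (Multiset ℕ) :=
    fun n => (fun xs : Fin n → ℕ => Multiset.map xs Finset.univ.val) '' (sols n k) with hA
  -- each solution tuple gives a distinct multiset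
  have h1 : ∀ n, (sols n k).ncard = (A n).ncard := by
    intro n
    exact (Set.ncard_image_of_injOn
      (fun f hf g hg h => aux_mono_inj n f g hf.2.1 hg.2.1 h)).symm
  -- properties of the multisets in `A n`
  have hprop : ∀ n, k < n → n ≤ x → ∀ s ∈ A n,
      Multiset.card s = n ∧ (∀ a ∈ s, 0 < a) ∧ s.esymm k = s.prod ∧
        1 ≤ s.prod ∧ s.prod ≤ L := by
    intro n hn1 hn2 s hs
    obtain ⟨xs, hxs, rfl⟩ := hs
    beta_reduce
    have hcard : Multiset.card (Multiset.map xs Finset.univ.val) = n := by simp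
    have hpos : ∀ a ∈ Multiset.map xs Finset.univ.val, 0 < a := by
      intro a ha
      obtain ⟨i, _, rfl⟩ := Multiset.mem_map.mp ha
      exact hxs.1 i
    have hek : ∀ j, esymm n j xs = (Multiset.map xs Finset.univ.val).esymm j := by
      intro j
      exact (Finset.esymm_map_val xs Finset.univ j).symm
    have hprodeq : (Multiset.map xs Finset.univ.val).prod = ∏ i, xs i :=
      (Finset.prod_eq_multiset_prod Finset.univ xs).symm
    have hesymm : (Multiset.map xs Finset.univ.val).esymm k =
        (Multiset.map xs Finset.univ.val).prod := by
      have hself := aux_esymm_self (Multiset.map xs Finset.univ.val)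
      rw [hcard] at hself
      rw [← hek k, hxs.2.2, hek n, hself]
    refine ⟨hcard, hpos, hesymm, ?_, ?_⟩
    · have : (1:ℕ) ^ Multiset.card (Multiset.map xs Finset.univ.val) ≤
          (Multiset.map xs Finset.univ.val).prod :=
        Multiset.pow_card_le_prod fun a ha => hpos a ha
      simpa using this
    · have hmem : (∏ i, xs i) ∈ {p | ∃ xs ∈ sols n k, p = ∏ i, xs i} := ⟨xs, hxs, rfl⟩
      have hle : (∏ i, xs i) ≤ N n := (hN n hn1 hn2).2 hmem
      have hsup : N n ≤ L := Finset.le_sup (Finset.mem_Ioc.mpr ⟨hn1, hn2⟩)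
      rw [hprodeq]
      omega
  set U : Set (Multiset ℕ) := ⋃ n ∈ Finset.Ioc k x, A n with hU
  set V : Set (Multiset ℕ) := ⋃ l ∈ Finset.Icc 1 L, T l with hV
  set φ : Multiset ℕ → Multiset ℕ := fun s => s.filter (1 < ·) with hφ
  obtain ⟨K, rfl⟩ : ∃ K, k = K + 1 := ⟨k - 1, by omega⟩
  -- injectivity of φ on U
  have hinj : Set.InjOn φ U := by
    intro s hsU t htU h
    simp only [hU, Set.mem_iUnion, exists_prop] at hsU htU
    obtain ⟨ns, hns, hsA⟩ := hsU
    obtain ⟨nt, hnt, htA⟩ := htU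
    rw [Finset.mem_Ioc] at hns hnt
    obtain ⟨hc1, hp1, he1, _, _⟩ := hprop ns hns.1 hns.2 s hsA
    obtain ⟨hc2, hp2, he2, _, _⟩ := hprop nt hnt.1 hnt.2 t htA
    exact aux_key K s t hp1 hp2 (by omega) (by omega) he1 he2 h
  -- φ maps U into V
  have himg : φ '' U ⊆ V := by
    rintro _ ⟨s, hsU, rfl⟩
    simp only [hU, Set.mem_iUnion, exists_prop] at hsU
    obtain ⟨n, hn, hsA⟩ := hsU
    rw [Finset.mem_Ioc] at hn
    obtain ⟨hc, hp, he, hpr1, hprL⟩ := hprop n hn.1 hn.2 s hsA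
    have hprodφ : (φ s).prod = s.prod := by
      have hd := aux_decomp s hp
      conv_rhs => rw [hd]
      simp [hφ]
    simp only [hV, Set.mem_iUnion, exists_prop]
    refine ⟨s.prod, Finset.mem_Icc.mpr ⟨hpr1, hprL⟩, ?_, hprodφ⟩
    intro a ha
    exact Multiset.of_mem_filter ha
  -- finiteness
  have hVfin : V.Finite :=
    Set.Finite.biUnion (Finset.Icc 1 L).finite_toSet (fun l _ => aux_T_finite l)
  have hUfin : U.Finite :=
    Set.Finite.of_finite_image (hVfin.subset himg) hinj
  -- disjointness of the A n (cards differ)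
  have hdisj : ∀ i ∈ Finset.Ioc (K+1) x, ∀ j ∈ Finset.Ioc (K+1) x, i ≠ j →
      Disjoint (A i) (A j) := by
    intro i hi j hj hij
    rw [Finset.mem_Ioc] at hi hj
    rw [Set.disjoint_left]
    intro s hsi hsj
    have := (hprop i hi.1 hi.2 s hsi).1
    have := (hprop j hj.1 hj.2 s hsj).1
    omega
  calc ∑ n ∈ Finset.Ioc (K+1) x, (sols n (K+1)).ncard
      = ∑ n ∈ Finset.Ioc (K+1) x, (A n).ncard :=
        Finset.sum_congr rfl (fun n _ => h1 n)
    _ = U.ncard := by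
        rw [aux_ncard_biUnion_eq _ _
          (fun n hn => hUfin.subset (Set.subset_biUnion_of_mem hn)) hdisj]
    _ = (φ '' U).ncard := (Set.ncard_image_of_injOn hinj).symm
    _ ≤ V.ncard := Set.ncard_le_ncard himg hVfin
    _ ≤ ∑ l ∈ Finset.Icc 1 L, (T l).ncard := aux_ncard_biUnion_le _ _
    _ = ∑ l ∈ Finset.Icc 1 L, numFactorizations l := rfl
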